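/- For each integer n ≥ 2, with T_m and P_n as in the example (T_m(x) = x on [0, 2m/(2m-1)], T_m(x) = (1/m - 1)x + 2 otherwise; P_n(x) = x on [0,1], P_n(x) = 1 on (1, n/(n-1)), P_n(x) = (1/n - 1)x + 2 on [n/(n-1), 2]): every closed subset K of [0,2] invariant under all T_m (m ≥ 2) is also P_n-invariant, i.e., P_n(K) ⊆ K. -/

import Mathlib

@[simp] private theorem set_mem_def_aux {α : Type*} {a : α} {s : Set α} : a ∈ s ↔ s a := Iff.rfl

private lemma step_lemma
    (T : ℕ → ℝ → ℝ)
    (hT : T = fun (n : ℕ) (x : ℝ) => if x ≤ 2 * n / (2 * n - 1) then x else (1 / n - 1) * x + 2)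
    (K : Set ℝ)
    (hKinv : ∀ m : ℕ, 2 ≤ m → Set.MapsTo (T m) K K)
    (y : ℝ) (hy : y ∈ K) (h1 : 1 < y) (h2 : y < 2) :
    ∃ z ∈ K, 1 ≤ z ∧ z - 1 ≤ (y - 1) ^ 2 := by
  subst hT
  set d : ℝ := y - 1 with hdd
  have hd : 0 < d := by simp [hdd]; linarith
  set m : ℕ := ⌊y / d⌋₊ with hm
  have hyd2 : (2 : ℝ) < y / d := by
    rw [lt_div_iff₀ hd]; simp [hdd]; nlinarith
  have hm2 : 2 ≤ m := Nat.le_floor (by push_cast; linarith)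
  have hmle : (m : ℝ) ≤ y / d := Nat.floor_le (by positivity)
  have hmgt : y / d < m + 1 := Nat.lt_floor_add_one _
  have hm0 : (0 : ℝ) < m := by
    have : (2 : ℝ) ≤ m := by exact_mod_cast hm2
    linarith
  -- m * d ≤ y and 1 < m * d
  have hym : (m : ℝ) * d ≤ y := (le_div_iff₀ hd).mp hmle
  have h1d : 1 < (m : ℝ) * d := by
    have h' : y < ((m:ℝ) + 1) * d := (div_lt_iff₀ hd).mp hmgt
    have hyd1 : y - d = 1 := by simp [hdd]
    nlinarith
  -- y is above the threshold of T m
  have hthr : ¬ (y ≤ 2 * m / (2 * m - 1)) := by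
    push_neg
    rw [div_lt_iff₀ (by linarith : (0:ℝ) < 2 * m - 1)]
    nlinarith
  have hz : (1 / (m:ℝ) - 1) * y + 2 ∈ K := by
    have h := hKinv m hm2 hy
    simp only [set_mem_def_aux] at h ⊢
    simpa [hthr] using h
  have hu0 : (0:ℝ) < 1 / m := by positivity
  have hum : (1 / (m:ℝ)) * m = 1 := by field_simp
  have hduy : d ≤ (1 / (m:ℝ)) * y := by
    nlinarith [mul_le_mul_of_nonneg_left hym hu0.le]
  have hud : (1 / (m:ℝ)) < d := by
    nlinarith [mul_lt_mul_of_pos_left h1d hu0]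
  refine ⟨(1 / (m:ℝ) - 1) * y + 2, hz, ?_, ?_⟩
  · have : d = y - 1 := hdd
    linarith [hduy]
  · have huy : (1 / (m:ℝ)) * y ≤ d * y := by nlinarith
    have : d = y - 1 := hdd
    nlinarith

private lemma one_mem
    (T : ℕ → ℝ → ℝ)
    (hT : T = fun (n : ℕ) (x : ℝ) => if x ≤ 2 * n / (2 * n - 1) then x else (1 / n - 1) * x + 2)
    (K : Set ℝ) (hKcl : IsClosed K)
    (hKinv : ∀ m : ℕ, 2 ≤ m → Set.MapsTo (T m) K K)
    (x : ℝ) (hx : x ∈ K) (h1 : 1 < x) (h2 : x < 2) :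
    (1 : ℝ) ∈ K := by
  set d₀ : ℝ := x - 1 with hdd
  have hd0 : 0 < d₀ := by simp [hdd]; linarith
  have hd1 : d₀ < 1 := by simp [hdd]; linarith
  have claim : ∀ k : ℕ, ∃ y ∈ K, 1 ≤ y ∧ y - 1 ≤ d₀ ^ (k + 1) := by
    intro k
    induction k with
    | zero => exact ⟨x, hx, h1.le, by simp [hdd]⟩
    | succ k ih =>
      obtain ⟨y, hyK, hy1, hyd⟩ := ih
      rcases eq_or_lt_of_le hy1 with heq | hlt
      · refine ⟨y, hyK, hy1, ?_⟩
        rw [← heq]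
        have : (0:ℝ) ≤ d₀ ^ (k + 1 + 1) := by positivity
        linarith
      · have hdk : d₀ ^ (k + 1) ≤ d₀ := by
          calc d₀ ^ (k+1) ≤ d₀ ^ 1 := pow_le_pow_of_le_one hd0.le hd1.le (by omega)
          _ = d₀ := pow_one _
        have hy2 : y < 2 := by linarith
        obtain ⟨z, hzK, hz1, hzd⟩ := step_lemma T hT K hKinv y hyK hlt hy2
        refine ⟨z, hzK, hz1, ?_⟩
        have h1' : (y - 1) ^ 2 ≤ (d₀ ^ (k+1)) ^ 2 := by
          apply pow_le_pow_left₀ (by linarith) hyd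
        have h2' : (d₀ ^ (k+1)) ^ 2 ≤ d₀ ^ (k + 2) := by
          rw [← pow_mul]
          exact pow_le_pow_of_le_one hd0.le hd1.le (by omega)
        linarith
  have : (1 : ℝ) ∈ closure K := by
    rw [Metric.mem_closure_iff]
    intro ε hε
    obtain ⟨N, hN⟩ := exists_pow_lt_of_lt_one hε hd1
    obtain ⟨y, hyK, hy1, hyd⟩ := claim N
    refine ⟨y, hyK, ?_⟩
    have : d₀ ^ (N + 1) ≤ d₀ ^ N := pow_le_pow_of_le_one hd0.le hd1.le (by omega)
    rw [Real.dist_eq, abs_sub_comm, abs_of_nonneg (by linarith)]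
    linarith
  rwa [hKcl.closure_eq] at this

theorem stmt_18
    (T P : ℕ → ℝ → ℝ)
    (hT : T = fun (n : ℕ) (x : ℝ) => if x ≤ 2 * n / (2 * n - 1) then x else (1 / n - 1) * x + 2)
    (hP : P = fun (n : ℕ) (x : ℝ) => if x ≤ 1 then x else if x < n / (n - 1) then 1 else (1 / n - 1) * x + 2)
    (n : ℕ) (hn : 2 ≤ n)
    (K : Set ℝ) (hKsub : K ⊆ Set.Icc 0 2) (hKcl : IsClosed K)
    (hKinv : ∀ m : ℕ, 2 ≤ m → Set.MapsTo (T m) K K) :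
    Set.MapsTo (P n) K K := by
  have hn2 : (2 : ℝ) ≤ n := by exact_mod_cast hn
  intro x hx
  subst hP
  simp only [set_mem_def_aux]
  by_cases hx1 : x ≤ 1
  · simpa [hx1] using hx
  · push_neg at hx1
    by_cases hx2 : x < (n : ℝ) / (n - 1)
    · have hxle2 : x < 2 := by
        have : (n : ℝ) / (n - 1) ≤ 2 := by
          rw [div_le_iff₀ (by linarith : (0:ℝ) < (n:ℝ) - 1)]
          linarith
        linarith
      have h1K : (1 : ℝ) ∈ K := one_mem T hT K hKcl hKinv x hx hx1 hxle2
      simpa [not_le.mpr hx1, hx2] using h1K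
    · push_neg at hx2
      have hthr : ¬ (x ≤ 2 * n / (2 * n - 1)) := by
        push_neg
        have : 2 * (n:ℝ) / (2 * n - 1) < (n:ℝ) / (n - 1) := by
          rw [div_lt_div_iff₀ (by linarith : (0:ℝ) < 2*(n:ℝ) - 1) (by linarith : (0:ℝ) < (n:ℝ) - 1)]
          nlinarith
        linarith
      have h := hKinv n hn hx
      rw [hT] at h
      simp only [set_mem_def_aux] at h ⊢
      simp only [hthr, if_false, not_le.mpr hx1, if_false, not_lt.mpr hx2, if_false] at h ⊢
      exact h
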